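/- If an increasing sequence of positive integers b_n satisfies b_{n+1} ≥ b_n^3 for all sufficiently large n and b_n ≥ 2, then the sum r = ∑_n 1/b_n is irrational. -/

import Mathlib

set_option maxHeartbeats 800000 in
/-- If an increasing sequence of positive integers `b_n ≥ 2` satisfies
`b_{n+1} ≥ b_n^3` for all sufficiently large `n`, then `∑ 1/b_n` is irrational. -/
theorem fast_growing_sum_irrational (b : ℕ → ℕ) (hmono : StrictMono b)
    (hb2 : ∀ n, 2 ≤ b n) (hcube : ∃ N, ∀ n, N ≤ n → (b n) ^ 3 ≤ b (n + 1)) :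
    Irrational (∑' n : ℕ, (1 : ℝ) / b n) := by
  obtain ⟨N, hN⟩ := hcube
  have hbpos : ∀ n, 0 < b n := fun n => lt_of_lt_of_le (by norm_num) (hb2 n)
  have hbR : ∀ n, (0:ℝ) < (b n : ℝ) := fun n => by exact_mod_cast hbpos n
  -- growth: b (n+k) ≥ b n * 2^k for n ≥ N
  have hgrow : ∀ n, N ≤ n → ∀ k, b n * 2 ^ k ≤ b (n + k) := by
    intro n hn k
    induction k with
    | zero => simp
    | succ k ih =>
        have h1 : b (n+k) ^ 3 ≤ b (n+k+1) := hN _ (le_trans hn (Nat.le_add_right _ _))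
        have h2 : 2 * b (n+k) ≤ b (n+k) ^ 3 := by
          calc 2 * b (n+k) ≤ b (n+k) * b (n+k) := Nat.mul_le_mul_right _ (hb2 (n+k))
            _ = b (n+k) ^ 2 := (sq _).symm
            _ ≤ b (n+k) ^ 3 := Nat.pow_le_pow_right (hbpos _) (by norm_num)
        calc b n * 2 ^ (k+1) = 2 * (b n * 2 ^ k) := by ring
          _ ≤ 2 * b (n+k) := Nat.mul_le_mul_left _ ih
          _ ≤ b (n+k+1) := le_trans h2 h1
  -- pointwise bound
  have hle : ∀ n, N ≤ n → ∀ k, (1:ℝ) / b (k + n) ≤ (1/2)^k * (1 / b n) := by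
    intro n hn k
    have h : (b n : ℝ) * 2 ^ k ≤ b (k + n) := by
      have := hgrow n hn k
      rw [Nat.add_comm n k] at this
      exact_mod_cast this
    have h2 : (0:ℝ) < (b n : ℝ) * 2 ^ k := mul_pos (hbR n) (by positivity)
    have h3 : ((1:ℝ)/2)^k * (1 / b n) = 1 / ((b n : ℝ) * 2^k) := by
      rw [one_div_pow, div_mul_div_comm, one_mul, mul_comm]
    rw [h3]
    exact one_div_le_one_div_of_le h2 h
  -- summability
  have hsumN : Summable (fun k : ℕ => (1:ℝ) / b (k + N)) := by
    apply Summable.of_nonneg_of_le (fun k => by positivity) (hle N le_rfl)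
    exact (summable_geometric_of_lt_one (by norm_num) (by norm_num)).mul_right _
  have hsum : Summable (fun n : ℕ => (1:ℝ) / b n) := (summable_nat_add_iff N).mp hsumN
  -- tail bound
  have htail : ∀ n, N ≤ n → (∑' k : ℕ, (1:ℝ) / b (k + n)) ≤ 2 / b n := by
    intro n hn
    have hs1 : Summable (fun k : ℕ => (1:ℝ) / b (k + n)) := (summable_nat_add_iff n).mpr hsum
    have hs2 : Summable (fun k : ℕ => ((1:ℝ)/2)^k * (1 / b n)) :=
      (summable_geometric_of_lt_one (by norm_num) (by norm_num)).mul_right _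
    calc (∑' k : ℕ, (1:ℝ) / b (k + n)) ≤ ∑' k : ℕ, ((1:ℝ)/2)^k * (1 / b n) :=
          Summable.tsum_le_tsum (hle n hn) hs1 hs2
      _ = (∑' k : ℕ, ((1:ℝ)/2)^k) * (1 / b n) := tsum_mul_right
      _ = 2 / b n := by
          rw [tsum_geometric_of_lt_one (by norm_num) (by norm_num)]
          norm_num [div_eq_mul_inv]
  -- suppose rational
  rintro ⟨s, hs⟩
  set q : ℕ := s.den with hq
  set p : ℤ := s.num with hp
  have hq0 : 0 < q := s.pos
  have hq0R : ((q:ℝ)) ≠ 0 := Nat.cast_ne_zero.mpr hq0.ne'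
  have hsval : (s:ℝ) = (p:ℝ) / q := by rw [hp, hq, Rat.cast_def]
  set C : ℕ := ∏ m ∈ Finset.range N, b m with hC
  have hC0 : 0 < C := Finset.prod_pos (fun m _ => hbpos m)
  set n : ℕ := max N (2 * q * C + 1) with hn
  have hnN : N ≤ n := le_max_left _ _
  have hbn : 2 * q * C < b n := by
    have h1 : 2 * q * C + 1 ≤ n := le_max_right _ _
    have h2 : n ≤ b n := hmono.le_apply
    omega
  -- squared product bound
  have hsq : ∀ m, N ≤ m → (∏ i ∈ Finset.Ico N m, b i) ^ 2 ≤ b m := by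
    intro m hm
    induction m, hm using Nat.le_induction with
    | base => simp; exact hbpos N
    | succ m hm ih =>
        have h1 : (∏ i ∈ Finset.Ico N (m+1), b i) = (∏ i ∈ Finset.Ico N m, b i) * b m :=
          Finset.prod_Ico_succ_top hm _
        calc (∏ i ∈ Finset.Ico N (m+1), b i)^2
            = (∏ i ∈ Finset.Ico N m, b i)^2 * b m ^2 := by rw [h1]; ring
          _ ≤ b m * b m ^ 2 := Nat.mul_le_mul_right _ ih
          _ = b m ^ 3 := by ring
          _ ≤ b (m+1) := hN m hm
  set Q : ℕ := ∏ i ∈ Finset.Ico N (n+1), b i with hQ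
  set P : ℕ := ∏ i ∈ Finset.range (n+1), b i with hP
  have hQ0 : 0 < Q := Finset.prod_pos (fun m _ => hbpos m)
  have hP0 : 0 < P := Finset.prod_pos (fun m _ => hbpos m)
  have hPCQ : P = C * Q := by
    rw [hP, hC, hQ, Finset.prod_range_mul_prod_Ico _ (le_trans hnN (Nat.le_succ n))]
  have hQsq : Q ^ 2 ≤ b (n+1) := hsq (n+1) (le_trans hnN (Nat.le_succ n))
  have hbnQ : b n ≤ Q := by
    apply Finset.single_le_prod' (fun i _ => (hbpos i))
    simp only [Finset.mem_Ico]
    omega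
  -- tail
  set T : ℝ := ∑' k : ℕ, (1:ℝ) / b (k + (n+1)) with hT
  have hsT : Summable (fun k : ℕ => (1:ℝ) / b (k + (n+1))) := (summable_nat_add_iff _).mpr hsum
  have hsplit : (∑ i ∈ Finset.range (n+1), (1:ℝ)/b i) + T = ∑' m : ℕ, (1:ℝ)/b m :=
    Summable.sum_add_tsum_nat_add (n+1) hsum
  have hT0 : 0 < T := Summable.tsum_pos hsT (fun k => by positivity) 0 (one_div_pos.mpr (hbR _))
  have h1 : T = (p:ℝ)/q - ∑ i ∈ Finset.range (n+1), (1:ℝ)/b i := by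
    have hr : (∑' m : ℕ, (1:ℝ)/b m) = (p:ℝ)/q := by rw [← hs, hsval]
    rw [← hr, ← hsplit]; ring
  have hcast : ∀ m ∈ Finset.range (n+1), ((P / b m : ℕ) : ℝ) = (P:ℝ) / b m := fun m hm =>
    Nat.cast_div (Finset.dvd_prod_of_mem b hm) (hbR m).ne'
  have hPS : (P:ℝ) * (∑ i ∈ Finset.range (n+1), (1:ℝ)/b i)
      = ∑ i ∈ Finset.range (n+1), ((P / b i : ℕ) : ℝ) := by
    rw [Finset.mul_sum]
    refine Finset.sum_congr rfl (fun m hm => ?_)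
    rw [hcast m hm, mul_one_div]
  set z : ℤ := p * P - q * ∑ m ∈ Finset.range (n+1), ((P / b m : ℕ) : ℤ) with hz
  have hzval : (z:ℝ) = (q:ℝ) * P * T := by
    have e1 : (q:ℝ) * P * T
        = (p:ℝ)*P - (q:ℝ)*((P:ℝ)*(∑ i ∈ Finset.range (n+1), (1:ℝ)/b i)) := by
      rw [h1]; field_simp
    rw [e1, hPS, hz]
    simp only [Int.cast_sub, Int.cast_mul, Int.cast_sum, Int.cast_natCast]
  have hz1 : (1:ℝ) ≤ (q:ℝ) * P * T := by
    have : (0:ℝ) < (z:ℝ) := by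
      rw [hzval]
      have : (0:ℝ) < (q:ℝ) * P := by positivity
      exact mul_pos this hT0
    have : 0 < z := by exact_mod_cast this
    have : (1:ℤ) ≤ z := this
    calc (1:ℝ) = ((1:ℤ):ℝ) := by norm_num
      _ ≤ (z:ℝ) := by exact_mod_cast this
      _ = _ := hzval
  have hnat : 2 * q * P < b (n+1) := by
    calc 2 * q * P = 2 * q * C * Q := by rw [hPCQ]; ring
      _ < b n * Q := (Nat.mul_lt_mul_right hQ0).mpr hbn
      _ ≤ Q * Q := Nat.mul_le_mul_right _ hbnQ
      _ = Q ^ 2 := (sq Q).symm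
      _ ≤ b (n+1) := hQsq
  have hlast : (q:ℝ) * P * T < 1 := by
    have ht : T ≤ 2 / b (n+1) := htail (n+1) (le_trans hnN (Nat.le_succ n))
    have hqP : (0:ℝ) ≤ (q:ℝ) * P := by positivity
    calc (q:ℝ) * P * T ≤ (q:ℝ) * P * (2 / b (n+1)) := mul_le_mul_of_nonneg_left ht hqP
      _ = (2 * q * P : ℕ) / (b (n+1)) := by push_cast; ring
      _ < 1 := by
          rw [div_lt_one (hbR _)]
          exact_mod_cast hnat
  linarith
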